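/- For a linear code C ⊆ F_q^n, (σ^{e-κ}(C))_{⊥_κ} = C^⊥ = σ^{e-κ}(C_{⊥_κ}). -/
import Mathlib


/-- For a linear code `C ⊆ F_q^n`, `(σ^{e-κ}(C))_{⊥_κ} = C^⊥ = σ^{e-κ}(C_{⊥_κ})`. -/
theorem leftGaloisDual_frob_image_eq_euclideanDual
    (p e κ n : ℕ) (hp : p.Prime) (hκ : κ < e)
    (F : Type) [Field F] [Fintype F] (hcard : Fintype.card F = p ^ e)
    (C : Submodule F (Fin n → F)) :
    {a : Fin n → F |
        ∀ c ∈ (fun v : Fin n → F => fun i => v i ^ p ^ (e - κ)) '' (C : Set (Fin n → F)),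
          ∑ i, a i * c i ^ p ^ κ = 0}
      = {a : Fin n → F | ∀ c ∈ C, ∑ i, a i * c i = 0} ∧
    {a : Fin n → F | ∀ c ∈ C, ∑ i, a i * c i = 0}
      = (fun v : Fin n → F => fun i => v i ^ p ^ (e - κ)) ''
          {a : Fin n → F | ∀ c ∈ C, ∑ i, a i * c i ^ p ^ κ = 0} := by
  have hFp : Fact p.Prime := ⟨hp⟩
  -- the characteristic of F is p
  have hchar : CharP F p := by
    haveI := ringChar.charP F
    obtain ⟨m, hqp, hcard'⟩ := FiniteField.card F (ringChar F)
    have hdvd : ringChar F ∣ p ^ e := by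
      rw [← hcard, hcard']
      exact dvd_pow_self _ m.2.ne'
    have : ringChar F = p := (Nat.prime_dvd_prime_iff_eq hqp hp).mp
      (hqp.dvd_of_dvd_pow hdvd)
    exact this ▸ ringChar.charP F
  have hpe : ∀ x : F, x ^ p ^ e = x := by
    intro x
    rw [← hcard]; exact FiniteField.pow_card x
  have hkey : ∀ x : F, (x ^ p ^ (e - κ)) ^ p ^ κ = x := by
    intro x
    rw [← pow_mul, ← pow_add, Nat.sub_add_cancel hκ.le]
    exact hpe x
  have hsum : ∀ (m : ℕ) (f : Fin n → F), (∑ i, f i) ^ p ^ m = ∑ i, f i ^ p ^ m := by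
    intro m f
    simpa only [iterateFrobenius_def] using (map_sum (iterateFrobenius F p m) f Finset.univ)
  constructor
  · ext a
    simp only [Set.mem_setOf_eq]
    constructor
    · intro h c hc
      have := h (fun i => c i ^ p ^ (e - κ)) ⟨c, hc, rfl⟩
      simpa [hkey] using this
    · intro h c hc
      obtain ⟨v, hv, rfl⟩ := hc
      simpa [hkey] using h v hv
  · ext a
    simp only [Set.mem_setOf_eq, Set.mem_image]
    constructor
    · intro h
      refine ⟨fun i => a i ^ p ^ κ, ?_, ?_⟩
      · intro c hc
        have := h c hc
        calc ∑ i, a i ^ p ^ κ * c i ^ p ^ κ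
            = ∑ i, (a i * c i) ^ p ^ κ := by
              simp [mul_pow]
          _ = (∑ i, a i * c i) ^ p ^ κ := (hsum κ _).symm
          _ = 0 := by rw [this]; exact zero_pow (pow_pos hp.pos κ).ne'
      · funext i
        simp only
        rw [← pow_mul, ← pow_add, Nat.add_sub_cancel' hκ.le]
        exact hpe (a i)
    · rintro ⟨b, hb, rfl⟩ c hc
      have := hb c hc
      have h2 : (∑ i, b i * c i ^ p ^ κ) ^ p ^ (e - κ) = 0 := by
        rw [this]; exact zero_pow (pow_pos hp.pos _).ne'
      calc ∑ i, b i ^ p ^ (e - κ) * c i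
          = ∑ i, (b i * c i ^ p ^ κ) ^ p ^ (e - κ) := by
            apply Finset.sum_congr rfl
            intro i _
            rw [mul_pow, ← pow_mul, ← pow_add, Nat.add_sub_cancel' hκ.le, hpe]
        _ = (∑ i, b i * c i ^ p ^ κ) ^ p ^ (e - κ) := (hsum (e - κ) _).symm
        _ = 0 := h2
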